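/- Let R be a ring and σ : P₋₁ → P₀ an R-linear map between projective R-modules. Let C = P₀/range(σ) be the cokernel of σ and let σ' : P₋₁ → range(σ) be the map σ with codomain restricted to its image. Then for every R-module M the following are equivalent: (1) every R-linear map P₋₁ → M factors through σ (i.e. M ∈ D_σ); (2) every R-linear map P₋₁ → M factors through σ' (i.e. M ∈ D_{σ'}) and every short exact sequence 0 → M → X → C → 0 of R-modules splits (i.e. Ext¹_R(C, M) = 0). -/

import Mathlib

universe u

/-- `M ∈ D_σ`: every `R`-linear map `A → M` factors through `σ : A → B`. -/
def MemD {R : Type u} [Ring R] {A B : Type u} [AddCommGroup A] [Module R A]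
    [AddCommGroup B] [Module R B] (σ : A →ₗ[R] B)
    (M : Type u) [AddCommGroup M] [Module R M] : Prop :=
  ∀ f : A →ₗ[R] M, ∃ g : B →ₗ[R] M, g.comp σ = f

/-- Lemma: `M ∈ D_σ` iff `M ∈ D_{σ'}` (with `σ' : P₋₁ → range σ` the corestriction of `σ`)
and every short exact sequence `0 → M → X → C → 0`, where `C = coker σ`, splits. -/
theorem stmt_0 {R : Type u} [Ring R]
    (P₁ P₀ : Type u) [AddCommGroup P₁] [Module R P₁] [AddCommGroup P₀] [Module R P₀]
    [Module.Projective R P₁] [Module.Projective R P₀] (σ : P₁ →ₗ[R] P₀)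
    (M : Type u) [AddCommGroup M] [Module R M] :
    MemD σ M ↔
      (MemD σ.rangeRestrict M ∧
       ∀ (X : Type u) [AddCommGroup X] [Module R X]
         (i : M →ₗ[R] X) (p : X →ₗ[R] P₀ ⧸ LinearMap.range σ),
         Function.Injective i → Function.Surjective p →
         LinearMap.ker p = LinearMap.range i →
         ∃ r : X →ₗ[R] M, r.comp i = LinearMap.id) := by
  constructor
  · intro hM
    constructor
    · intro f
      obtain ⟨g, hg⟩ := hM f
      refine ⟨g.comp (LinearMap.range σ).subtype, ?_⟩
      ext x
      simpa using LinearMap.congr_fun hg x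
    · intro X _ _ i p inj surj hker
      -- lift mkQ along p
      obtain ⟨h, hh⟩ := Module.projective_lifting_property p (LinearMap.range σ).mkQ surj
      set e : M ≃ₗ[R] LinearMap.range i := LinearEquiv.ofInjective i inj with he
      have hmem : ∀ x : P₁, h (σ x) ∈ LinearMap.range i := by
        intro x
        rw [← hker, LinearMap.mem_ker]
        have := LinearMap.congr_fun hh (σ x)
        simp only [LinearMap.comp_apply] at this
        rw [this]
        simp [Submodule.Quotient.mk_eq_zero]
      set f₁ : P₁ →ₗ[R] LinearMap.range i :=
        LinearMap.codRestrict (LinearMap.range i) (h.comp σ) hmem with hf₁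
      set f : P₁ →ₗ[R] M := e.symm.toLinearMap.comp f₁ with hf
      have hif : ∀ x, i (f x) = h (σ x) := by
        intro x
        have h1 : (e (f x) : X) = i (f x) := LinearEquiv.ofInjective_apply i (f x)
        have h2 : e (f x) = f₁ x := by
          simp [hf, LinearMap.comp_apply]
        rw [← h1, h2]
        rfl
      obtain ⟨g, hg⟩ := hM f
      set h' : P₀ →ₗ[R] X := h - i.comp g with hh'
      have hpi : ∀ m, p (i m) = 0 := by
        intro m
        rw [← LinearMap.mem_ker, hker]
        exact ⟨m, rfl⟩
      have hσker : LinearMap.range σ ≤ LinearMap.ker h' := by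
        rintro _ ⟨x, rfl⟩
        have hgx : g (σ x) = f x := by
          have := LinearMap.congr_fun hg x
          simpa using this
        simp only [LinearMap.mem_ker, hh', LinearMap.sub_apply, LinearMap.comp_apply]
        rw [hgx, hif, sub_self]
      set s : (P₀ ⧸ LinearMap.range σ) →ₗ[R] X :=
        Submodule.liftQ (LinearMap.range σ) h' hσker with hs
      have hps : p.comp s = LinearMap.id := by
        apply Submodule.linearMap_qext
        ext q
        simp only [LinearMap.comp_apply, hs, Submodule.mkQ_apply, Submodule.liftQ_apply,
          LinearMap.id_apply, hh', LinearMap.sub_apply, map_sub, hpi]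
        have := LinearMap.congr_fun hh q
        simp only [LinearMap.comp_apply, Submodule.mkQ_apply] at this
        rw [this]
        simp
      have htmem : ∀ x : X, x - s (p x) ∈ LinearMap.range i := by
        intro x
        rw [← hker, LinearMap.mem_ker, map_sub]
        have := LinearMap.congr_fun hps (p x)
        simp only [LinearMap.comp_apply, LinearMap.id_apply] at this
        rw [this, sub_self]
      set t : X →ₗ[R] LinearMap.range i :=
        LinearMap.codRestrict (LinearMap.range i) (LinearMap.id - s.comp p) htmem with ht
      refine ⟨e.symm.toLinearMap.comp t, ?_⟩
      ext m
      simp only [LinearMap.comp_apply, LinearMap.id_apply, LinearEquiv.coe_coe]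
      have hte : t (i m) = e m := by
        apply Subtype.ext
        have h1 : (e m : X) = i m := LinearEquiv.ofInjective_apply i m
        simp only [ht, LinearMap.codRestrict_apply, LinearMap.sub_apply, LinearMap.id_apply,
          LinearMap.comp_apply, hpi, map_zero, sub_zero, h1]
      rw [hte, LinearEquiv.symm_apply_apply]
  · rintro ⟨h₁, h₂⟩ f
    obtain ⟨g₀, hg₀⟩ := h₁ f
    set φ : (LinearMap.range σ) →ₗ[R] M × P₀ :=
      LinearMap.prod g₀ (-(LinearMap.range σ).subtype) with hφ
    set N := LinearMap.range φ with hN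
    set i : M →ₗ[R] (M × P₀) ⧸ N := N.mkQ.comp (LinearMap.inl R M P₀) with hi
    have hple : N ≤ LinearMap.ker (((LinearMap.range σ).mkQ).comp (LinearMap.snd R M P₀)) := by
      rintro _ ⟨y, rfl⟩
      simp only [LinearMap.mem_ker, LinearMap.comp_apply, hφ, LinearMap.prod_apply,
        Function.prod, LinearMap.snd_apply, LinearMap.neg_apply, map_neg,
        Submodule.mkQ_apply, neg_eq_zero, Submodule.Quotient.mk_eq_zero]
      exact y.2
    set p : ((M × P₀) ⧸ N) →ₗ[R] P₀ ⧸ LinearMap.range σ :=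
      Submodule.liftQ N (((LinearMap.range σ).mkQ).comp (LinearMap.snd R M P₀)) hple with hp
    have inj : Function.Injective i := by
      intro m m' hmm
      have hmem : (m - m', (0 : P₀)) ∈ N := by
        rw [← Submodule.Quotient.mk_eq_zero]
        have h0 : i (m - m') = 0 := by rw [map_sub, hmm, sub_self]
        simpa [hi, Prod.ext_iff] using h0
      obtain ⟨y, hy⟩ := hmem
      simp only [hφ, LinearMap.prod_apply, Function.prod, LinearMap.neg_apply, Prod.ext_iff,
        neg_eq_zero] at hy
      have hy0 : y = 0 := by
        apply Subtype.ext
        simpa using hy.2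
      rw [hy0, map_zero] at hy
      exact sub_eq_zero.mp hy.1.symm
    have surj : Function.Surjective p := by
      intro c
      obtain ⟨q, rfl⟩ := (LinearMap.range σ).mkQ_surjective c
      exact ⟨N.mkQ (0, q), by simp [hp]⟩
    have hker : LinearMap.ker p = LinearMap.range i := by
      apply le_antisymm
      · intro x hx
        obtain ⟨⟨m, q⟩, rfl⟩ := N.mkQ_surjective x
        simp only [LinearMap.mem_ker, hp, Submodule.mkQ_apply, Submodule.liftQ_apply,
          LinearMap.comp_apply, LinearMap.snd_apply, Submodule.Quotient.mk_eq_zero] at hx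
        refine ⟨m + g₀ ⟨q, hx⟩, ?_⟩
        simp only [hi, LinearMap.comp_apply, LinearMap.inl_apply, Submodule.mkQ_apply]
        rw [Submodule.Quotient.eq]
        refine ⟨⟨q, hx⟩, ?_⟩
        simp [hφ, Prod.ext_iff]
      · rintro _ ⟨m, rfl⟩
        simp [LinearMap.mem_ker, hi, hp]
    obtain ⟨r, hr⟩ := h₂ ((M × P₀) ⧸ N) i p inj surj hker
    refine ⟨r.comp (N.mkQ.comp (LinearMap.inr R M P₀)), ?_⟩
    ext x
    simp only [LinearMap.comp_apply, LinearMap.inr_apply, Submodule.mkQ_apply]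
    have key : (Submodule.Quotient.mk ((0 : M), σ x) : (M × P₀) ⧸ N) = i (f x) := by
      simp only [hi, LinearMap.comp_apply, LinearMap.inl_apply, Submodule.mkQ_apply]
      rw [Submodule.Quotient.eq]
      refine ⟨-(σ.rangeRestrict x), ?_⟩
      have hgf : g₀ (σ.rangeRestrict x) = f x := by
        have := LinearMap.congr_fun hg₀ x
        simpa using this
      simp [hφ, Prod.ext_iff, hgf]
    rw [key, ← LinearMap.comp_apply, hr, LinearMap.id_apply]
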